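/- Let ξ ∈ F^× be a unit with 0 < |σ(ξ)| ≤ |ξ|, let c₁, c₂ > 0, and define c′ = max{c₁|σ(ξ)|/|ξ| + c₂|ξ|/|σ(ξ)|, c₂|σ(ξ)|/|ξ| + c₁|ξ|/|σ(ξ)|}. Let α, w, c ∈ O_F be nonzero elements satisfying N(w) ≤ N(α), |σ(ξ)| ≤ |σ(w)|/|w| ≤ |ξ|, |σ(ξ)| ≤ |σ(α)|/|α| ≤ |ξ|, |c| ≤ c₁|α| and |σ(c)| ≤ c₂|σ(α)|. Then N(w − c) ≤ (1 + c₁c₂ + c′)²·N(α). -/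

import Mathlib

open IntermediateField NumberField

set_option maxHeartbeats 1000000
noncomputable section

/-- `β = i·√(D + B√D)` (positive real square roots). -/
def qβ (B D : ℕ) : ℂ :=
  Complex.I * ((Real.sqrt ((D : ℝ) + (B : ℝ) * Real.sqrt (D : ℝ)) : ℝ) : ℂ)

/-- `β₃ = i·√(D − B√D)`. -/
def qβ₃ (B D : ℕ) : ℂ :=
  Complex.I * ((Real.sqrt ((D : ℝ) - (B : ℝ) * Real.sqrt (D : ℝ)) : ℝ) : ℂ)

/-- The imaginary cyclic quartic field `F = ℚ(β) = ℚ(√(−(D + B√D))) ⊆ ℂ`. -/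
def qF (B D : ℕ) : IntermediateField ℚ ℂ := ℚ⟮qβ B D⟯

/-- The complex absolute value of an element of `F`, via the inclusion `F ⊆ ℂ`. -/
def qAbs {B D : ℕ} (x : qF B D) : ℝ := ‖(x : ℂ)‖

/-- `N(x) = |x|²·|σ(x)|²`, the absolute value of the field norm of `x ∈ F`. -/
def qNorm {B D : ℕ} (σ : qF B D ≃ₐ[ℚ] qF B D) (x : qF B D) : ℝ :=
  qAbs x ^ 2 * qAbs (σ x) ^ 2

/-- Let `ξ` be a unit with `0 < |σ(ξ)| ≤ |ξ|`, let `c₁, c₂ > 0`, and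
`c′ = max{c₁|σ(ξ)|/|ξ| + c₂|ξ|/|σ(ξ)|, c₂|σ(ξ)|/|ξ| + c₁|ξ|/|σ(ξ)|}`. If the nonzero
`α, w, c ∈ O_F` satisfy `N(w) ≤ N(α)`, `|σ(ξ)| ≤ |σ(w)|/|w| ≤ |ξ|`,
`|σ(ξ)| ≤ |σ(α)|/|α| ≤ |ξ|`, `|c| ≤ c₁|α|` and `|σ(c)| ≤ c₂|σ(α)|`, then
`N(w − c) ≤ (1 + c₁c₂ + c′)²·N(α)`. -/

private lemma core14 (s t c₁ c₂ x y : ℝ) (hs : 0 < s) (hst : s ≤ t) (hc₁ : 0 < c₁)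
    (hc₂ : 0 < c₂) (hx : 0 < x) (hy : 0 < y) (hxy : x * y ≤ 1)
    (h1 : s * x ≤ t * y) (h2 : s * y ≤ t * x) :
    c₂ * x + c₁ * y ≤ max (c₁ * s / t + c₂ * t / s) (c₂ * s / t + c₁ * t / s) := by
  have ht : 0 < t := lt_of_lt_of_le hs hst
  have hx2 : s * x ^ 2 ≤ t := by
    nlinarith [mul_le_mul_of_nonneg_right h1 hx.le, mul_le_mul_of_nonneg_left hxy ht.le]
  have hy2 : s * y ^ 2 ≤ t := by
    nlinarith [mul_le_mul_of_nonneg_right h2 hy.le, mul_le_mul_of_nonneg_left hxy ht.le]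
  have F1 : s * x ≤ t := by nlinarith [sq_nonneg (s * x - t), mul_le_mul_of_nonneg_left hx2 hs.le]
  have F2 : s * y ≤ t := by nlinarith [sq_nonneg (s * y - t), mul_le_mul_of_nonneg_left hy2 hs.le]
  have F3 : s * t * (x + y) ≤ s ^ 2 + t ^ 2 := by
    rcases le_or_gt s (t * x) with h | h
    · rcases le_or_gt s (t * y) with h' | h'
      · nlinarith [mul_nonneg (sub_nonneg.2 h) (sub_nonneg.2 h')]
      · nlinarith
    · nlinarith
  rcases le_total c₁ c₂ with hcc | hcc
  · refine le_trans ?_ (le_max_left _ _)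
    rw [div_add_div _ _ (ne_of_gt ht) (ne_of_gt hs), le_div_iff₀ (by positivity)]
    nlinarith [mul_nonneg (sub_nonneg.2 hcc) (sub_nonneg.2 F1)]
  · refine le_trans ?_ (le_max_right _ _)
    rw [div_add_div _ _ (ne_of_gt ht) (ne_of_gt hs), le_div_iff₀ (by positivity)]
    nlinarith [mul_nonneg (sub_nonneg.2 hcc) (sub_nonneg.2 F2)]

private lemma qAbs_sub_le {B D : ℕ} (x y : qF B D) : qAbs (x - y) ≤ qAbs x + qAbs y := by
  unfold qAbs
  push_cast
  exact norm_sub_le _ _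

private lemma qAbs_pos {B D : ℕ} {x : qF B D} (h : x ≠ 0) : 0 < qAbs x := by
  unfold qAbs
  rw [norm_pos_iff]
  exact_mod_cast h

theorem statement14 (B C D : ℕ) (hB : 0 < B) (hC : 0 < C) (hD : D = B ^ 2 + C ^ 2)
    (hsf : Squarefree D)
    (σ : qF B D ≃ₐ[ℚ] qF B D)
    (hσ : ((σ ⟨qβ B D, mem_adjoin_simple_self ℚ (qβ B D)⟩ : qF B D) : ℂ) = -(qβ₃ B D))
    (ξ : (𝓞 (qF B D))ˣ)
    (hσξpos : 0 < qAbs (σ ((ξ : 𝓞 (qF B D)) : qF B D)))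
    (hσξle : qAbs (σ ((ξ : 𝓞 (qF B D)) : qF B D)) ≤ qAbs ((ξ : 𝓞 (qF B D)) : qF B D))
    (c₁ c₂ : ℝ) (hc₁ : 0 < c₁) (hc₂ : 0 < c₂)
    (c' : ℝ)
    (hc' : c' = max
      (c₁ * qAbs (σ ((ξ : 𝓞 (qF B D)) : qF B D)) / qAbs ((ξ : 𝓞 (qF B D)) : qF B D) +
        c₂ * qAbs ((ξ : 𝓞 (qF B D)) : qF B D) / qAbs (σ ((ξ : 𝓞 (qF B D)) : qF B D)))
      (c₂ * qAbs (σ ((ξ : 𝓞 (qF B D)) : qF B D)) / qAbs ((ξ : 𝓞 (qF B D)) : qF B D) +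
        c₁ * qAbs ((ξ : 𝓞 (qF B D)) : qF B D) / qAbs (σ ((ξ : 𝓞 (qF B D)) : qF B D))))
    (α w c : 𝓞 (qF B D)) (hα : α ≠ 0) (hw : w ≠ 0) (hcne : c ≠ 0)
    (hNw : qNorm σ ((w : 𝓞 (qF B D)) : qF B D) ≤ qNorm σ ((α : 𝓞 (qF B D)) : qF B D))
    (hw1 : qAbs (σ ((ξ : 𝓞 (qF B D)) : qF B D)) ≤
      qAbs (σ ((w : 𝓞 (qF B D)) : qF B D)) / qAbs ((w : 𝓞 (qF B D)) : qF B D))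
    (hw2 : qAbs (σ ((w : 𝓞 (qF B D)) : qF B D)) / qAbs ((w : 𝓞 (qF B D)) : qF B D) ≤
      qAbs ((ξ : 𝓞 (qF B D)) : qF B D))
    (hα1 : qAbs (σ ((ξ : 𝓞 (qF B D)) : qF B D)) ≤
      qAbs (σ ((α : 𝓞 (qF B D)) : qF B D)) / qAbs ((α : 𝓞 (qF B D)) : qF B D))
    (hα2 : qAbs (σ ((α : 𝓞 (qF B D)) : qF B D)) / qAbs ((α : 𝓞 (qF B D)) : qF B D) ≤
      qAbs ((ξ : 𝓞 (qF B D)) : qF B D))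
    (hcb : qAbs ((c : 𝓞 (qF B D)) : qF B D) ≤ c₁ * qAbs ((α : 𝓞 (qF B D)) : qF B D))
    (hσcb : qAbs (σ ((c : 𝓞 (qF B D)) : qF B D)) ≤
      c₂ * qAbs (σ ((α : 𝓞 (qF B D)) : qF B D))) :
    qNorm σ (((w - c : 𝓞 (qF B D)) : qF B D)) ≤
      (1 + c₁ * c₂ + c') ^ 2 * qNorm σ ((α : 𝓞 (qF B D)) : qF B D) := by
  -- notation
  set t := qAbs ((ξ : 𝓞 (qF B D)) : qF B D) with ht_def
  set s := qAbs (σ ((ξ : 𝓞 (qF B D)) : qF B D)) with hs_def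
  set A := qAbs ((α : 𝓞 (qF B D)) : qF B D) with hA_def
  set A' := qAbs (σ ((α : 𝓞 (qF B D)) : qF B D)) with hA'_def
  set W := qAbs ((w : 𝓞 (qF B D)) : qF B D) with hW_def
  set W' := qAbs (σ ((w : 𝓞 (qF B D)) : qF B D)) with hW'_def
  have hαF : ((α : 𝓞 (qF B D)) : qF B D) ≠ 0 := by exact_mod_cast hα
  have hwF : ((w : 𝓞 (qF B D)) : qF B D) ≠ 0 := by exact_mod_cast hw
  have hApos : 0 < A := qAbs_pos hαF
  have hA'pos : 0 < A' := qAbs_pos (by simpa using (map_ne_zero σ).mpr hαF)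
  have hWpos : 0 < W := qAbs_pos hwF
  have hW'pos : 0 < W' := qAbs_pos (by simpa using (map_ne_zero σ).mpr hwF)
  have hspos : 0 < s := hσξpos
  -- ratio bounds, multiplied out
  have hw1' : s * W ≤ W' := by
    have := (le_div_iff₀ hWpos).mp hw1; linarith
  have hw2' : W' ≤ t * W := by
    have := (div_le_iff₀ hWpos).mp hw2; linarith
  have hα1' : s * A ≤ A' := by
    have := (le_div_iff₀ hApos).mp hα1; linarith
  have hα2' : A' ≤ t * A := by
    have := (div_le_iff₀ hApos).mp hα2; linarith
  -- N(w) ≤ N(α) gives W·W' ≤ A·A'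
  have hNw' : W * W' ≤ A * A' := by
    have h2 : (W * W') ^ 2 ≤ (A * A') ^ 2 := by
      simp only [qNorm] at hNw; nlinarith [hNw]
    nlinarith [mul_pos hApos hA'pos, mul_pos hWpos hW'pos]
  -- apply core lemma with x = W/A, y = W'/A'
  have hx : 0 < W / A := by positivity
  have hy : 0 < W' / A' := by positivity
  have hxy : (W / A) * (W' / A') ≤ 1 := by
    rw [div_mul_div_comm]
    exact (div_le_one (by positivity)).mpr hNw'
  have h1 : s * (W / A) ≤ t * (W' / A') := by
    rw [← mul_div_assoc, ← mul_div_assoc, div_le_div_iff₀ hApos hA'pos]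
    nlinarith [mul_le_mul_of_nonneg_right hw1' hA'pos.le,
      mul_le_mul_of_nonneg_left hα2' hW'pos.le]
  have h2 : s * (W' / A') ≤ t * (W / A) := by
    rw [← mul_div_assoc, ← mul_div_assoc, div_le_div_iff₀ hA'pos hApos]
    nlinarith [mul_le_mul_of_nonneg_right hw2' hApos.le,
      mul_le_mul_of_nonneg_left hα1' hWpos.le]
  have hcore := core14 s t c₁ c₂ (W / A) (W' / A') hspos hσξle hc₁ hc₂ hx hy hxy h1 h2
  rw [← hc'] at hcore
  have hkey : c₂ * W * A' + c₁ * A * W' ≤ c' * (A * A') := by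
    have := mul_le_mul_of_nonneg_right hcore (le_of_lt (mul_pos hApos hA'pos))
    have e : (c₂ * (W / A) + c₁ * (W' / A')) * (A * A') = c₂ * W * A' + c₁ * A * W' := by
      field_simp
    linarith [e ▸ this]
  -- c' > 0
  have htpos : 0 < t := lt_of_lt_of_le hspos hσξle
  have hc'pos : 0 < c' := by
    rw [hc']
    refine lt_of_lt_of_le ?_ (le_max_left _ _)
    exact add_pos (div_pos (mul_pos hc₁ hspos) htpos) (div_pos (mul_pos hc₂ htpos) hspos)
  -- triangle inequalities
  have hsub : ((w - c : 𝓞 (qF B D)) : qF B D)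
      = ((w : 𝓞 (qF B D)) : qF B D) - ((c : 𝓞 (qF B D)) : qF B D) := by
    push_cast; ring
  have tri1 : qAbs ((w - c : 𝓞 (qF B D)) : qF B D) ≤ W + c₁ * A := by
    rw [hsub]
    exact le_trans (qAbs_sub_le _ _) (by linarith [hcb])
  have tri2 : qAbs (σ ((w - c : 𝓞 (qF B D)) : qF B D)) ≤ W' + c₂ * A' := by
    rw [hsub, map_sub]
    exact le_trans (qAbs_sub_le _ _) (by linarith [hσcb])
  -- finish
  have habs1 : 0 ≤ qAbs ((w - c : 𝓞 (qF B D)) : qF B D) := by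
    unfold qAbs; positivity
  have habs2 : 0 ≤ qAbs (σ ((w - c : 𝓞 (qF B D)) : qF B D)) := by
    unfold qAbs; positivity
  have hmain : qAbs ((w - c : 𝓞 (qF B D)) : qF B D)
      * qAbs (σ ((w - c : 𝓞 (qF B D)) : qF B D)) ≤ (1 + c₁ * c₂ + c') * (A * A') := by
    have hp : qAbs ((w - c : 𝓞 (qF B D)) : qF B D)
        * qAbs (σ ((w - c : 𝓞 (qF B D)) : qF B D)) ≤ (W + c₁ * A) * (W' + c₂ * A') :=
      mul_le_mul tri1 tri2 habs2 (by positivity)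
    nlinarith [hkey, hNw']
  have hRHSnn : 0 ≤ (1 + c₁ * c₂ + c') * (A * A') := by positivity
  simp only [qNorm]
  calc qAbs ((w - c : 𝓞 (qF B D)) : qF B D) ^ 2
        * qAbs (σ ((w - c : 𝓞 (qF B D)) : qF B D)) ^ 2
      = (qAbs ((w - c : 𝓞 (qF B D)) : qF B D)
        * qAbs (σ ((w - c : 𝓞 (qF B D)) : qF B D))) ^ 2 := by ring
    _ ≤ ((1 + c₁ * c₂ + c') * (A * A')) ^ 2 := by
        exact pow_le_pow_left₀ (by positivity) hmain 2
    _ = (1 + c₁ * c₂ + c') ^ 2 * (A ^ 2 * A' ^ 2) := by ring
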